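/- The semigroup SL₂ℕ of 2×2 integer matrices with nonnegative entries and determinant 1 is the free semigroup generated by the two matrices [[1,1],[0,1]] and [[1,0],[1,1]]; that is, every element of SL₂ℕ other than the identity can be written uniquely as a finite product of these two generators. -/

import Mathlib

open Matrix

/-- The monoid `SL₂ℕ` of 2×2 integer matrices with nonnegative entries
and determinant 1. -/
def SL2N : Set (Matrix (Fin 2) (Fin 2) ℤ) :=
  {A | (∀ i j, 0 ≤ A i j) ∧ A.det = 1}

/-- The generator `[[1,1],[0,1]]`. -/
def gen1 : Matrix (Fin 2) (Fin 2) ℤ := !![1, 1; 0, 1]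

/-- The generator `[[1,0],[1,1]]`. -/
def gen2 : Matrix (Fin 2) (Fin 2) ℤ := !![1, 0; 1, 1]

lemma gen1_mem : gen1 ∈ SL2N := by
  constructor
  · intro i j; fin_cases i <;> fin_cases j <;> simp [gen1]
  · simp [gen1, Matrix.det_fin_two_of]

lemma gen2_mem : gen2 ∈ SL2N := by
  constructor
  · intro i j; fin_cases i <;> fin_cases j <;> simp [gen2]
  · simp [gen2, Matrix.det_fin_two_of]

lemma one_mem_SL2N : (1 : Matrix (Fin 2) (Fin 2) ℤ) ∈ SL2N := by
  constructor
  · intro i j; fin_cases i <;> fin_cases j <;> simp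
  · simp

lemma mul_mem_SL2N {A B : Matrix (Fin 2) (Fin 2) ℤ} (hA : A ∈ SL2N) (hB : B ∈ SL2N) :
    A * B ∈ SL2N := by
  obtain ⟨hA1, hA2⟩ := hA
  obtain ⟨hB1, hB2⟩ := hB
  constructor
  · intro i j
    rw [Matrix.mul_apply, Fin.sum_univ_two]
    have := hA1 i 0; have := hA1 i 1; have := hB1 0 j; have := hB1 1 j
    positivity
  · rw [Matrix.det_mul, hA2, hB2]; ring

lemma prod_mem_SL2N : ∀ l : List (Matrix (Fin 2) (Fin 2) ℤ),
    (∀ M ∈ l, M = gen1 ∨ M = gen2) → l.prod ∈ SL2N := by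
  intro l
  induction l with
  | nil => intro _; simpa using one_mem_SL2N
  | cons g t ih =>
      intro h
      rw [List.prod_cons]
      have hg := h g List.mem_cons_self
      have ht := ih (fun M hM => h M (List.mem_cons_of_mem g hM))
      rcases hg with hg | hg <;> subst hg
      · exact mul_mem_SL2N gen1_mem ht
      · exact mul_mem_SL2N gen2_mem ht

-- entries of gen1 * B and gen2 * B
lemma gen1_mul_apply (B : Matrix (Fin 2) (Fin 2) ℤ) :
    (gen1 * B) 0 0 = B 0 0 + B 1 0 ∧ (gen1 * B) 0 1 = B 0 1 + B 1 1 ∧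
    (gen1 * B) 1 0 = B 1 0 ∧ (gen1 * B) 1 1 = B 1 1 := by
  refine ⟨?_, ?_, ?_, ?_⟩ <;>
    simp [gen1, Matrix.mul_apply, Fin.sum_univ_two]

lemma gen2_mul_apply (B : Matrix (Fin 2) (Fin 2) ℤ) :
    (gen2 * B) 0 0 = B 0 0 ∧ (gen2 * B) 0 1 = B 0 1 ∧
    (gen2 * B) 1 0 = B 0 0 + B 1 0 ∧ (gen2 * B) 1 1 = B 0 1 + B 1 1 := by
  refine ⟨?_, ?_, ?_, ?_⟩ <;>
    simp [gen2, Matrix.mul_apply, Fin.sum_univ_two]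

lemma gen1_mul_ne_one {B : Matrix (Fin 2) (Fin 2) ℤ} (hB : B ∈ SL2N) : gen1 * B ≠ 1 := by
  intro h
  obtain ⟨h1, h2, h3, h4⟩ := gen1_mul_apply B
  rw [h] at h1 h2 h3 h4
  simp [Matrix.one_apply] at h1 h2 h3 h4
  have := hB.1 0 1
  omega

lemma gen2_mul_ne_one {B : Matrix (Fin 2) (Fin 2) ℤ} (hB : B ∈ SL2N) : gen2 * B ≠ 1 := by
  intro h
  obtain ⟨h1, h2, h3, h4⟩ := gen2_mul_apply B
  rw [h] at h1 h2 h3 h4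
  simp [Matrix.one_apply] at h1 h2 h3 h4
  have := hB.1 1 0
  omega

lemma heads_ne {B C : Matrix (Fin 2) (Fin 2) ℤ} (hB : B ∈ SL2N) (hC : C ∈ SL2N) :
    gen1 * B ≠ gen2 * C := by
  intro h
  obtain ⟨b1, b2, b3, b4⟩ := gen1_mul_apply B
  obtain ⟨c1, c2, c3, c4⟩ := gen2_mul_apply C
  rw [h] at b1 b2 b3 b4
  have hB00 := hB.1 0 0
  have hB01 := hB.1 0 1
  have hC10 := hC.1 1 0
  have hC11 := hC.1 1 1
  -- det (gen2 * C) = 1 but rows are equal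
  have hdet : (gen2 * C).det = 1 := (mul_mem_SL2N gen2_mem hC).2
  rw [Matrix.det_fin_two] at hdet
  have e1 : (gen2 * C) 0 0 = (gen2 * C) 1 0 := by linarith
  have e2 : (gen2 * C) 0 1 = (gen2 * C) 1 1 := by linarith
  rw [e1, e2] at hdet
  linarith

lemma gen_cancel {g X Y : Matrix (Fin 2) (Fin 2) ℤ} (hg : g = gen1 ∨ g = gen2)
    (h : g * X = g * Y) : X = Y := by
  have : ∃ h : Matrix (Fin 2) (Fin 2) ℤ, h * g = 1 := by
    rcases hg with hg | hg <;> subst hg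
    · exact ⟨!![1, -1; 0, 1], by simp [gen1, Matrix.mul_fin_two, Matrix.one_fin_two]⟩
    · exact ⟨!![1, 0; -1, 1], by simp [gen2, Matrix.mul_fin_two, Matrix.one_fin_two]⟩
  obtain ⟨ginv, hginv⟩ := this
  calc X = ginv * g * X := by rw [hginv, one_mul]
    _ = ginv * (g * Y) := by rw [mul_assoc, h]
    _ = Y := by rw [← mul_assoc, hginv, one_mul]

lemma unique_decomp : ∀ l₁ l₂ : List (Matrix (Fin 2) (Fin 2) ℤ),
    (∀ M ∈ l₁, M = gen1 ∨ M = gen2) → (∀ M ∈ l₂, M = gen1 ∨ M = gen2) →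
    l₁.prod = l₂.prod → l₁ = l₂ := by
  intro l₁
  induction l₁ with
  | nil =>
      intro l₂ _ h2 hp
      cases l₂ with
      | nil => rfl
      | cons g t =>
          exfalso
          have hg := h2 g List.mem_cons_self
          have ht := prod_mem_SL2N t (fun M hM => h2 M (List.mem_cons_of_mem g hM))
          simp only [List.prod_nil, List.prod_cons] at hp
          rcases hg with hg | hg <;> subst hg
          · exact gen1_mul_ne_one ht hp.symm
          · exact gen2_mul_ne_one ht hp.symm
  | cons g t ih =>
      intro l₂ h1 h2 hp
      cases l₂ with
      | nil =>
          exfalso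
          have hg := h1 g List.mem_cons_self
          have ht := prod_mem_SL2N t (fun M hM => h1 M (List.mem_cons_of_mem g hM))
          simp only [List.prod_nil, List.prod_cons] at hp
          rcases hg with hg | hg <;> subst hg
          · exact gen1_mul_ne_one ht hp
          · exact gen2_mul_ne_one ht hp
      | cons g' t' =>
          have hg := h1 g List.mem_cons_self
          have hg' := h2 g' List.mem_cons_self
          have ht := prod_mem_SL2N t (fun M hM => h1 M (List.mem_cons_of_mem g hM))
          have ht' := prod_mem_SL2N t' (fun M hM => h2 M (List.mem_cons_of_mem g' hM))
          simp only [List.prod_cons] at hp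
          have hgg : g = g' := by
            rcases hg with hg | hg <;> rcases hg' with hg' | hg' <;> subst hg <;> subst hg'
            · rfl
            · exact absurd hp (heads_ne ht ht')
            · exact absurd hp.symm (heads_ne ht' ht)
            · rfl
          subst hgg
          have : t.prod = t'.prod := gen_cancel hg hp
          rw [ih t' (fun M hM => h1 M (List.mem_cons_of_mem g hM))
            (fun M hM => h2 M (List.mem_cons_of_mem g hM)) this]

lemma exists_decomp : ∀ n : ℕ, ∀ A ∈ SL2N, A ≠ 1 →
    (A 0 0 + A 0 1 + A 1 0 + A 1 1).toNat ≤ n →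
    ∃ l : List (Matrix (Fin 2) (Fin 2) ℤ),
      l ≠ [] ∧ (∀ M ∈ l, M = gen1 ∨ M = gen2) ∧ l.prod = A := by
  intro n
  induction n with
  | zero =>
      intro A hA _ hn
      exfalso
      have h00 := hA.1 0 0; have h01 := hA.1 0 1
      have h10 := hA.1 1 0; have h11 := hA.1 1 1
      have hdet := hA.2
      rw [Matrix.det_fin_two] at hdet
      have : A 0 0 + A 0 1 + A 1 0 + A 1 1 ≤ 0 := by omega
      nlinarith
  | succ n ih =>
      intro A hA hA1 hn
      have h00 := hA.1 0 0; have h01 := hA.1 0 1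
      have h10 := hA.1 1 0; have h11 := hA.1 1 1
      have hdet := hA.2
      rw [Matrix.det_fin_two] at hdet
      have hAeta : A = !![A 0 0, A 0 1; A 1 0, A 1 1] := Matrix.eta_fin_two A
      -- trichotomy
      have hcases : (A 1 0 ≤ A 0 0 ∧ A 1 1 ≤ A 0 1) ∨ (A 0 0 ≤ A 1 0 ∧ A 0 1 ≤ A 1 1) := by
        rcases le_or_gt (A 1 0) (A 0 0) with k1 | k1 <;>
          rcases le_or_gt (A 1 1) (A 0 1) with k2 | k2
        · exact Or.inl ⟨k1, k2⟩
        · rcases eq_or_lt_of_le k1 with k1' | k1'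
          · exact Or.inr ⟨le_of_eq k1'.symm, le_of_lt k2⟩
          · exfalso
            have hb : A 0 1 = 0 := by nlinarith
            have hc : A 1 0 = 0 := by nlinarith
            have had : A 0 0 * A 1 1 = 1 := by nlinarith
            have ha : A 0 0 = 1 := by nlinarith
            have hd : A 1 1 = 1 := by nlinarith
            exact hA1 (by rw [hAeta, ha, hb, hc, hd, Matrix.one_fin_two])
        · exfalso; nlinarith
        · exact Or.inr ⟨le_of_lt k1, le_of_lt k2⟩
      rcases hcases with ⟨hc1, hc2⟩ | ⟨hc1, hc2⟩
      · -- A = gen1 * B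
        set B : Matrix (Fin 2) (Fin 2) ℤ := !![A 0 0 - A 1 0, A 0 1 - A 1 1; A 1 0, A 1 1] with hBdef
        have hAB : A = gen1 * B := by
          rw [hAeta, hBdef, gen1, Matrix.mul_fin_two]
          congr 1 <;> ring
        have hB : B ∈ SL2N := by
          constructor
          · intro i j; fin_cases i <;> fin_cases j <;> simp [hBdef] <;> omega
          · rw [hBdef, Matrix.det_fin_two_of]; nlinarith
        have hcd : ¬ (A 1 0 = 0 ∧ A 1 1 = 0) := by
          rintro ⟨e1, e2⟩; rw [e1, e2] at hdet; omega
        by_cases hB1 : B = 1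
        · refine ⟨[gen1], by simp, by simp, ?_⟩
          simp [hAB, hB1]
        · obtain ⟨l, hl1, hl2, hl3⟩ := ih B hB hB1 (by
            have e00 : B 0 0 = A 0 0 - A 1 0 := by rw [hBdef]; simp
            have e01 : B 0 1 = A 0 1 - A 1 1 := by rw [hBdef]; simp
            have e10 : B 1 0 = A 1 0 := by rw [hBdef]; simp
            have e11 : B 1 1 = A 1 1 := by rw [hBdef]; simp
            rw [e00, e01, e10, e11]
            omega)
          refine ⟨gen1 :: l, by simp, ?_, ?_⟩
          · intro M hM
            rcases List.mem_cons.mp hM with h | h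
            · exact Or.inl h
            · exact hl2 M h
          · rw [List.prod_cons, hl3, hAB]
      · -- A = gen2 * B
        set B : Matrix (Fin 2) (Fin 2) ℤ := !![A 0 0, A 0 1; A 1 0 - A 0 0, A 1 1 - A 0 1] with hBdef
        have hAB : A = gen2 * B := by
          rw [hAeta, hBdef, gen2, Matrix.mul_fin_two]
          congr 1 <;> ring
        have hB : B ∈ SL2N := by
          constructor
          · intro i j; fin_cases i <;> fin_cases j <;> simp [hBdef] <;> omega
          · rw [hBdef, Matrix.det_fin_two_of]; nlinarith
        have hcd : ¬ (A 0 0 = 0 ∧ A 0 1 = 0) := by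
          rintro ⟨e1, e2⟩; rw [e1, e2] at hdet; omega
        by_cases hB1 : B = 1
        · refine ⟨[gen2], by simp, by simp, ?_⟩
          simp [hAB, hB1]
        · obtain ⟨l, hl1, hl2, hl3⟩ := ih B hB hB1 (by
            have e00 : B 0 0 = A 0 0 := by rw [hBdef]; simp
            have e01 : B 0 1 = A 0 1 := by rw [hBdef]; simp
            have e10 : B 1 0 = A 1 0 - A 0 0 := by rw [hBdef]; simp
            have e11 : B 1 1 = A 1 1 - A 0 1 := by rw [hBdef]; simp
            rw [e00, e01, e10, e11]
            omega)
          refine ⟨gen2 :: l, by simp, ?_, ?_⟩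
          · intro M hM
            rcases List.mem_cons.mp hM with h | h
            · exact Or.inr h
            · exact hl2 M h
          · rw [List.prod_cons, hl3, hAB]

/-- `SL₂ℕ` is the free semigroup on the two elementary generators: every
element other than the identity is a product of the generators in a unique way. -/
theorem sl2n_free_semigroup :
    ∀ A ∈ SL2N, A ≠ 1 →
      ∃! l : List (Matrix (Fin 2) (Fin 2) ℤ),
        l ≠ [] ∧ (∀ M ∈ l, M = gen1 ∨ M = gen2) ∧ l.prod = A := by
  intro A hA hA1
  obtain ⟨l, hl1, hl2, hl3⟩ :=
    exists_decomp (A 0 0 + A 0 1 + A 1 0 + A 1 1).toNat A hA hA1 le_rfl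
  refine ⟨l, ⟨hl1, hl2, hl3⟩, ?_⟩
  rintro l' ⟨_, hl2', hl3'⟩
  exact unique_decomp l' l hl2' hl2 (by rw [hl3, hl3'])
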